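/- For all integers m ≥ 2, r ≥ 2 and every i with 1 ≤ i ≤ r, the coefficients α_{m,r}(i) satisfy the recurrence r·α_{m,r}(i) − (r−1)·α_{m,r−1}(i) = m·i·(α_{m,r−1}(i−1) − α_{m,r−1}(i)). -/

import Mathlib

private lemma sum_extend_aux (s t : ℕ) (hst : s ≤ t) (f : ℕ → ℤ)
    (h : ∀ x ≤ t, x = 0 ∨ s < x → f x = 0) :
    ∑ i ∈ Finset.Icc 1 s, f i = ∑ i ∈ Finset.range (t+1), f i := by
  apply Finset.sum_subset
  · intro x hx
    simp only [Finset.mem_Icc] at hx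
    simp only [Finset.mem_range]; omega
  · intro x hx hx'
    simp only [Finset.mem_range] at hx
    simp only [Finset.mem_Icc] at hx'
    exact h x (by omega) (by omega)

private lemma pascal_cast (k i : ℕ) :
    ((k+1+(i+1)).choose (i+1) : ℤ) - ((k+(i+1)).choose (i+1)) = ((k+1+i).choose i) := by
  have h := Nat.choose_succ_succ (k+i+1) i
  have e1 : k+1+(i+1) = (k+i+1)+1 := by omega
  have e2 : k+(i+1) = k+i+1 := by omega
  have e3 : k+1+i = k+i+1 := by omega
  rw [e1, e2, e3, h]
  push_cast
  ring

private lemma indep : ∀ (r N : ℕ) (c : ℕ → ℤ),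
    (∀ k, N ≤ k → ∑ i ∈ Finset.range (r+1), c i * ((k + i).choose i : ℤ) = 0) →
    ∀ i ≤ r, c i = 0 := by
  intro r
  induction r with
  | zero =>
    intro N c h i hi
    interval_cases i
    have := h N le_rfl
    simpa using this
  | succ r ih =>
    intro N c h
    have hstep : ∀ k, N+1 ≤ k → ∑ i ∈ Finset.range (r+1), c (i+1) * ((k + i).choose i : ℤ) = 0 := by
      intro k hk
      obtain ⟨k', rfl⟩ : ∃ k', k = k'+1 := ⟨k-1, by omega⟩
      have hA := h k' (by omega)
      have hB := h (k'+1) (by omega)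
      have hdiff : ∑ i ∈ Finset.range (r+2),
          c i * (((k'+1 + i).choose i : ℤ) - ((k' + i).choose i : ℤ)) = 0 := by
        simp only [mul_sub, Finset.sum_sub_distrib, hA, hB, sub_zero]
      rw [Finset.sum_range_succ'] at hdiff
      simp only [Nat.add_zero, Nat.choose_zero_right, Nat.cast_one, sub_self, mul_zero,
        add_zero] at hdiff
      calc ∑ i ∈ Finset.range (r+1), c (i+1) * (((k'+1) + i).choose i : ℤ)
          = ∑ i ∈ Finset.range (r+1),
              c (i+1) * (((k'+1+(i+1)).choose (i+1) : ℤ) - ((k'+(i+1)).choose (i+1))) := by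
            apply Finset.sum_congr rfl
            intro i _
            rw [pascal_cast]
        _ = 0 := hdiff
    have h1 := ih (N+1) (fun i => c (i+1)) hstep
    have h0 : c 0 = 0 := by
      have hN := h N le_rfl
      rw [Finset.sum_range_succ'] at hN
      have hz : ∑ i ∈ Finset.range (r+1), c (i+1) * ((N + (i+1)).choose (i+1) : ℤ) = 0 :=
        Finset.sum_eq_zero (fun i hi => by
          have hz0 : c (i+1) = 0 := h1 i (Nat.lt_succ_iff.mp (Finset.mem_range.mp hi))
          rw [hz0]; ring)
      simpa [hz] using hN
    intro i hi
    cases i with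
    | zero => exact h0
    | succ j => exact h1 j (by omega)

theorem alpha_recurrence (m : ℕ) (hm : 2 ≤ m) (α : ℕ → ℕ → ℤ)
    (hzero : ∀ r i : ℕ, i = 0 ∨ r < i → α r i = 0)
    (hdef : ∀ r : ℕ, 1 ≤ r → ∀ n : ℕ, 1 ≤ n →
      ((m * n + r - 1).choose r : ℤ) =
        ∑ i ∈ Finset.Icc 1 r, α r i * ((n + i - 1).choose i))
    (r i : ℕ) (hr : 2 ≤ r) (hi1 : 1 ≤ i) (hir : i ≤ r) :
    (r : ℤ) * α r i - ((r : ℤ) - 1) * α (r - 1) i =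
      (m : ℤ) * (i : ℤ) * (α (r - 1) (i - 1) - α (r - 1) i) := by
  set c : ℕ → ℤ := fun j =>
    (r:ℤ) * α r j - ((r:ℤ) - 1 - (m:ℤ)*(j:ℤ)) * α (r-1) j
      - (m:ℤ)*(j:ℤ)*α (r-1) (j-1) with hc
  have hkey : ∀ k : ℕ, ∑ j ∈ Finset.range (r+1), c j * ((k+j).choose j : ℤ) = 0 := by
    intro k
    have hmk : 1 ≤ m*(k+1) := Nat.one_le_iff_ne_zero.mpr (Nat.mul_ne_zero (by omega) (by omega))
    have h1 := hdef r (by omega) (k+1) (by omega)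
    have h2 := hdef (r-1) (by omega) (k+1) (by omega)
    have h1' : ((m*(k+1) + r - 1).choose r : ℤ) =
        ∑ j ∈ Finset.range (r+1), α r j * ((k+j).choose j : ℤ) := by
      rw [h1]
      rw [show (∑ j ∈ Finset.Icc 1 r, α r j * (((k+1) + j - 1).choose j : ℤ)) =
          ∑ j ∈ Finset.Icc 1 r, α r j * ((k+j).choose j : ℤ) from
        Finset.sum_congr rfl (fun j _ => by rw [show (k+1)+j-1 = k+j from by omega])]
      exact sum_extend_aux r r le_rfl _ (fun x hx hx' => by
        rw [hzero r x (by omega)]; ring)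
    have h2' : ((m*(k+1) + r - 2).choose (r-1) : ℤ) =
        ∑ j ∈ Finset.range (r+1), α (r-1) j * ((k+j).choose j : ℤ) := by
      rw [show m*(k+1) + r - 2 = m*(k+1) + (r-1) - 1 from by omega, h2]
      rw [show (∑ j ∈ Finset.Icc 1 (r-1), α (r-1) j * (((k+1) + j - 1).choose j : ℤ)) =
          ∑ j ∈ Finset.Icc 1 (r-1), α (r-1) j * ((k+j).choose j : ℤ) from
        Finset.sum_congr rfl (fun j _ => by rw [show (k+1)+j-1 = k+j from by omega])]
      exact sum_extend_aux (r-1) r (by omega) _ (fun x hx hx' => by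
        rw [hzero (r-1) x (by omega)]; ring)
    -- identity A
    have idA : ((m*(k+1) + r - 1 : ℕ) : ℤ) * ((m*(k+1) + r - 2).choose (r-1) : ℤ) =
        (r:ℤ) * ((m*(k+1)+r-1).choose r : ℤ) := by
      have hn := Nat.add_one_mul_choose_eq (m*(k+1)+r-2) (r-1)
      have e1 : m*(k+1)+r-2+1 = m*(k+1)+r-1 := by omega
      have e3 : r-1+1 = r := by omega
      rw [e1, e3] at hn
      exact_mod_cast hn.trans (Nat.mul_comm _ _)
    have hC : ((m*(k+1) + r - 1 : ℕ) : ℤ) = (m:ℤ)*((k:ℤ)+1) + (r:ℤ) - 1 := by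
      have h2c : ((m*(k+1) : ℕ) : ℤ) = (m:ℤ)*((k:ℤ)+1) := by push_cast; ring
      omega
    -- identity B
    have idB : ∀ j : ℕ, ((k:ℤ)+1+(j:ℤ)) * ((k+j).choose j : ℤ)
        = ((j:ℤ)+1) * ((k+(j+1)).choose (j+1) : ℤ) := by
      intro j
      have hn := Nat.add_one_mul_choose_eq (k+j) j
      have e2 : k+j+1 = k+(j+1) := by omega
      have e4 : Nat.succ j = j + 1 := rfl
      rw [e2] at hn
      have hc2 := congrArg (Nat.cast (R := ℤ)) hn
      push_cast at hc2
      linear_combination hc2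
    -- big coefficient times the (r-1)-sum equals r * choose1
    have T : ∑ j ∈ Finset.range (r+1),
        α (r-1) j * (((m:ℤ)*((k:ℤ)+1) + (r:ℤ) - 1) * ((k+j).choose j : ℤ)) =
        (r:ℤ) * ((m*(k+1)+r-1).choose r : ℤ) := by
      rw [show (∑ j ∈ Finset.range (r+1),
          α (r-1) j * (((m:ℤ)*((k:ℤ)+1) + (r:ℤ) - 1) * ((k+j).choose j : ℤ)))
        = ((m:ℤ)*((k:ℤ)+1) + (r:ℤ) - 1) * ∑ j ∈ Finset.range (r+1),
            α (r-1) j * ((k+j).choose j : ℤ) from by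
          rw [Finset.mul_sum]; exact Finset.sum_congr rfl (fun j _ => by ring)]
      rw [← h2', ← hC, idA]
    -- pointwise expansion
    have expand : ∀ j : ℕ,
        α (r-1) j * (((m:ℤ)*((k:ℤ)+1) + (r:ℤ) - 1) * ((k+j).choose j : ℤ))
        = (m:ℤ)*((j:ℤ)+1)*α (r-1) j * ((k+(j+1)).choose (j+1) : ℤ)
          + ((r:ℤ) - 1 - (m:ℤ)*(j:ℤ)) * α (r-1) j * ((k+j).choose j : ℤ) := by
      intro j
      have hb := idB j
      linear_combination ((m:ℤ) * α (r-1) j) * hb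
    -- index shift
    have shift : ∑ j ∈ Finset.range (r+1),
        (m:ℤ)*((j:ℤ)+1)*α (r-1) j * ((k+(j+1)).choose (j+1) : ℤ)
        = ∑ j ∈ Finset.range (r+1), (m:ℤ)*(j:ℤ)*α (r-1) (j-1) * ((k+j).choose j : ℤ) := by
      rw [Finset.sum_range_succ, Finset.sum_range_succ']
      rw [hzero (r-1) r (by omega)]
      simp only [Nat.cast_zero, mul_zero, zero_mul, add_zero, Nat.add_sub_cancel,
        Nat.cast_add, Nat.cast_one]
    -- combining
    have T2 : ∑ j ∈ Finset.range (r+1),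
        α (r-1) j * (((m:ℤ)*((k:ℤ)+1) + (r:ℤ) - 1) * ((k+j).choose j : ℤ))
        = ∑ j ∈ Finset.range (r+1),
            ((m:ℤ)*(j:ℤ)*α (r-1) (j-1) + ((r:ℤ)-1-(m:ℤ)*(j:ℤ)) * α (r-1) j)
              * ((k+j).choose j : ℤ) := by
      calc ∑ j ∈ Finset.range (r+1),
            α (r-1) j * (((m:ℤ)*((k:ℤ)+1) + (r:ℤ) - 1) * ((k+j).choose j : ℤ))
          = ∑ j ∈ Finset.range (r+1),
              ((m:ℤ)*((j:ℤ)+1)*α (r-1) j * ((k+(j+1)).choose (j+1) : ℤ)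
              + ((r:ℤ) - 1 - (m:ℤ)*(j:ℤ)) * α (r-1) j * ((k+j).choose j : ℤ)) :=
            Finset.sum_congr rfl (fun j _ => expand j)
        _ = (∑ j ∈ Finset.range (r+1),
              (m:ℤ)*((j:ℤ)+1)*α (r-1) j * ((k+(j+1)).choose (j+1) : ℤ))
            + ∑ j ∈ Finset.range (r+1),
              ((r:ℤ) - 1 - (m:ℤ)*(j:ℤ)) * α (r-1) j * ((k+j).choose j : ℤ) :=
            Finset.sum_add_distrib
        _ = (∑ j ∈ Finset.range (r+1),
              (m:ℤ)*(j:ℤ)*α (r-1) (j-1) * ((k+j).choose j : ℤ))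
            + ∑ j ∈ Finset.range (r+1),
              ((r:ℤ) - 1 - (m:ℤ)*(j:ℤ)) * α (r-1) j * ((k+j).choose j : ℤ) := by
            rw [shift]
        _ = _ := by
            rw [← Finset.sum_add_distrib]
            exact Finset.sum_congr rfl (fun j _ => by ring)
    have hS1 : ∑ j ∈ Finset.range (r+1), ((r:ℤ) * α r j) * ((k+j).choose j : ℤ)
        = (r:ℤ) * ((m*(k+1)+r-1).choose r : ℤ) := by
      rw [h1', Finset.mul_sum]
      exact Finset.sum_congr rfl (fun j _ => by ring)
    calc ∑ j ∈ Finset.range (r+1), c j * ((k+j).choose j : ℤ)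
        = ∑ j ∈ Finset.range (r+1),
            (((r:ℤ) * α r j) * ((k+j).choose j : ℤ)
              - ((m:ℤ)*(j:ℤ)*α (r-1) (j-1) + ((r:ℤ)-1-(m:ℤ)*(j:ℤ)) * α (r-1) j)
                * ((k+j).choose j : ℤ)) :=
          Finset.sum_congr rfl (fun j _ => by simp only [hc]; ring)
      _ = (∑ j ∈ Finset.range (r+1), ((r:ℤ) * α r j) * ((k+j).choose j : ℤ))
          - ∑ j ∈ Finset.range (r+1),
              ((m:ℤ)*(j:ℤ)*α (r-1) (j-1) + ((r:ℤ)-1-(m:ℤ)*(j:ℤ)) * α (r-1) j)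
                * ((k+j).choose j : ℤ) := Finset.sum_sub_distrib _ _
      _ = 0 := by rw [hS1, ← T2, T, sub_self]
  have hci := indep r 0 c (fun k _ => hkey k) i hir
  rw [hc] at hci
  simp only at hci
  linear_combination hci
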